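/- Let 1 < α ≤ 2, 0 ≤ β < α - 1, a < b, and q : [a,b] → ℝ continuous. Suppose u : [a,b] → ℝ is continuous, not identically zero, u(t) > 0 on (a,b), and u(t) = ∫ₐᵇ G(t,s) q(s) u(s) ds for all t ∈ [a,b], where G is the Green's function of the fractional BVP. Then ∫ₐᵇ max(q(t),0) dt > Γ(α) · ((2α-2-β)/((b-a)(α-1)))^(α-1) · ((2α-2-β)/(α-1-β))^(α-1-β). -/

import Mathlib

noncomputable def G (a b α β t s : ℝ) : ℝ :=
  if s ≤ t then
    (1 / Real.Gamma α) *
      ((t - a) ^ (α - 1) * (b - s) ^ (α - 1 - β) / (b - a) ^ (α - 1 - β) -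
        (t - s) ^ (α - 1))
  else
    (1 / Real.Gamma α) *
      ((t - a) ^ (α - 1) * (b - s) ^ (α - 1 - β) / (b - a) ^ (α - 1 - β))


open Real Set MeasureTheory

lemma rpow_subadd {x y p : ℝ} (hx : 0 ≤ x) (hy : 0 ≤ y) (hp : 0 ≤ p) (hp1 : p ≤ 1) :
    (x + y) ^ p ≤ x ^ p + y ^ p := by
  have h := NNReal.rpow_add_le_add_rpow (⟨x, hx⟩ : NNReal) ⟨y, hy⟩ hp hp1
  have h2 := NNReal.coe_le_coe.2 h
  push_cast at h2
  exact h2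

variable {α β a b : ℝ}

lemma G_nonneg (hα : 1 < α) (hα2 : α ≤ 2) (hβ : 0 ≤ β) (hβα : β < α - 1) (hab : a < b)
    {t s : ℝ} (ht : t ∈ Icc a b) (hs : s ∈ Icc a b) : 0 ≤ G a b α β t s := by
  have hΓ : 0 < Real.Gamma α := Real.Gamma_pos_of_pos (by linarith)
  have hp : 0 < α - 1 := by linarith
  have hr : 0 < α - 1 - β := by linarith
  have hba : 0 < b - a := by linarith
  unfold G
  split
  · rename_i hst
    rw [mul_nonneg_iff_of_pos_left (by positivity), sub_nonneg]
    rcases eq_or_lt_of_le hs.2 with hsb | hsb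
    · have htb : t = b := le_antisymm ht.2 (hsb ▸ hst)
      rw [hsb, htb]
      simp [Real.zero_rpow hp.ne', Real.zero_rpow hr.ne']
    · -- s < b
      have h1 : t - s ≤ (t - a) * (b - s) / (b - a) := by
        rw [le_div_iff₀ hba]
        nlinarith [hs.1, ht.2, sub_nonneg.2 hst]
      have hts : 0 ≤ t - s := by linarith [hst]
      have h2 : (t - s) ^ (α - 1) ≤ ((t - a) * (b - s) / (b - a)) ^ (α - 1) :=
        Real.rpow_le_rpow hts h1 hp.le
      have h3 : ((t - a) * (b - s) / (b - a)) ^ (α - 1)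
          = (t - a) ^ (α - 1) * ((b - s) / (b - a)) ^ (α - 1) := by
        rw [mul_div_assoc, Real.mul_rpow (by linarith [ht.1, hs.1]) (div_nonneg (by linarith) hba.le)]
      have hratio : (b - s) / (b - a) ≤ 1 := by
        rw [div_le_one hba]; linarith [hs.1]
      have hratio0 : 0 < (b - s) / (b - a) := div_pos (by linarith) hba
      have h4 : ((b - s) / (b - a)) ^ (α - 1) ≤ ((b - s) / (b - a)) ^ (α - 1 - β) :=
        Real.rpow_le_rpow_of_exponent_ge hratio0 hratio (by linarith)
      have h5 : ((b - s) / (b - a)) ^ (α - 1 - β) = (b - s) ^ (α - 1 - β) / (b - a) ^ (α - 1 - β) :=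
        Real.div_rpow (by linarith) hba.le _
      calc (t - s) ^ (α - 1) ≤ (t - a) ^ (α - 1) * ((b - s) / (b - a)) ^ (α - 1) := h2.trans_eq h3
        _ ≤ (t - a) ^ (α - 1) * ((b - s) / (b - a)) ^ (α - 1 - β) := by
            apply mul_le_mul_of_nonneg_left h4 (Real.rpow_nonneg (by linarith [ht.1, hs.1]) _)
        _ = (t - a) ^ (α - 1) * (b - s) ^ (α - 1 - β) / (b - a) ^ (α - 1 - β) := by
            rw [h5]; ring
  · have h1 : 0 ≤ t - a := by linarith [ht.1]
    have h2 : 0 ≤ b - s := by linarith [hs.2]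
    positivity

/-- The bound function `H`. -/
noncomputable def Hb (a b α β s : ℝ) : ℝ :=
  (1 / Real.Gamma α) * ((s - a) ^ (α - 1) * (b - s) ^ (α - 1 - β) / (b - a) ^ (α - 1 - β))

lemma G_le_H (hα : 1 < α) (hα2 : α ≤ 2) (hβ : 0 ≤ β) (hβα : β < α - 1) (hab : a < b)
    {t s : ℝ} (ht : t ∈ Icc a b) (hs : s ∈ Icc a b) : G a b α β t s ≤ Hb a b α β s := by
  have hΓ : 0 < Real.Gamma α := Real.Gamma_pos_of_pos (by linarith)
  have hp : 0 < α - 1 := by linarith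
  have hr : 0 < α - 1 - β := by linarith
  have hba : 0 < b - a := by linarith
  have hsa : 0 ≤ s - a := by linarith [hs.1]
  have hbs : 0 ≤ b - s := by linarith [hs.2]
  have hta : 0 ≤ t - a := by linarith [ht.1]
  unfold G Hb
  have hcle : (b - s) ^ (α - 1 - β) / (b - a) ^ (α - 1 - β) ≤ 1 := by
    rw [div_le_one (Real.rpow_pos_of_pos hba _)]
    exact Real.rpow_le_rpow hbs (by linarith) hr.le
  have hc0 : 0 ≤ (b - s) ^ (α - 1 - β) / (b - a) ^ (α - 1 - β) :=
    div_nonneg (Real.rpow_nonneg hbs _) (Real.rpow_nonneg hba.le _)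
  split
  · rename_i hst
    apply mul_le_mul_of_nonneg_left _ (by positivity)
    have hD : 0 ≤ (t - a) ^ (α - 1) - (s - a) ^ (α - 1) :=
      sub_nonneg.2 (Real.rpow_le_rpow hsa (by linarith) hp.le)
    have hsub : (t - a) ^ (α - 1) ≤ (s - a) ^ (α - 1) + (t - s) ^ (α - 1) := by
      have := rpow_subadd hsa (sub_nonneg.2 hst) hp.le (by linarith)
      calc (t - a) ^ (α - 1) = ((s - a) + (t - s)) ^ (α - 1) := by ring_nf
        _ ≤ (s - a) ^ (α - 1) + (t - s) ^ (α - 1) := this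
    have hDc : ((t - a) ^ (α - 1) - (s - a) ^ (α - 1)) *
        ((b - s) ^ (α - 1 - β) / (b - a) ^ (α - 1 - β)) ≤
        (t - a) ^ (α - 1) - (s - a) ^ (α - 1) := by
      nlinarith
    have key : (t - a) ^ (α - 1) * (b - s) ^ (α - 1 - β) / (b - a) ^ (α - 1 - β) -
        (s - a) ^ (α - 1) * (b - s) ^ (α - 1 - β) / (b - a) ^ (α - 1 - β) =
        ((t - a) ^ (α - 1) - (s - a) ^ (α - 1)) *
          ((b - s) ^ (α - 1 - β) / (b - a) ^ (α - 1 - β)) := by ring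
    linarith [key, hDc, hsub]
  · apply mul_le_mul_of_nonneg_left _ (by positivity)
    have h1 : (t - a) ^ (α - 1) ≤ (s - a) ^ (α - 1) :=
      Real.rpow_le_rpow hta (by rename_i h; push_neg at h; linarith) hp.le
    have := mul_le_mul_of_nonneg_right h1 hc0
    calc (t - a) ^ (α - 1) * (b - s) ^ (α - 1 - β) / (b - a) ^ (α - 1 - β)
        = (t - a) ^ (α - 1) * ((b - s) ^ (α - 1 - β) / (b - a) ^ (α - 1 - β)) := by ring
      _ ≤ (s - a) ^ (α - 1) * ((b - s) ^ (α - 1 - β) / (b - a) ^ (α - 1 - β)) := this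
      _ = (s - a) ^ (α - 1) * (b - s) ^ (α - 1 - β) / (b - a) ^ (α - 1 - β) := by ring

lemma G_lt_H (hα : 1 < α) (hα2 : α ≤ 2) (hβ : 0 ≤ β) (hβα : β < α - 1) (hab : a < b)
    {t s : ℝ} (ht : t ∈ Icc a b) (hs : s ∈ Ioo a b) (hst : s ≠ t) :
    G a b α β t s < Hb a b α β s := by
  have hΓ : 0 < Real.Gamma α := Real.Gamma_pos_of_pos (by linarith)
  have hp : 0 < α - 1 := by linarith
  have hr : 0 < α - 1 - β := by linarith
  have hba : 0 < b - a := by linarith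
  have hsa : 0 < s - a := by linarith [hs.1]
  have hbs : 0 < b - s := by linarith [hs.2]
  have hta : 0 ≤ t - a := by linarith [ht.1]
  have hc0 : 0 < (b - s) ^ (α - 1 - β) / (b - a) ^ (α - 1 - β) :=
    div_pos (Real.rpow_pos_of_pos hbs _) (Real.rpow_pos_of_pos hba _)
  unfold G Hb
  split
  · rename_i hstle
    have hslt : s < t := lt_of_le_of_ne hstle hst
    apply mul_lt_mul_of_pos_left _ (by positivity)
    have hD : 0 < (t - a) ^ (α - 1) - (s - a) ^ (α - 1) :=
      sub_pos.2 (Real.rpow_lt_rpow hsa.le (by linarith) hp)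
    have hsub : (t - a) ^ (α - 1) ≤ (s - a) ^ (α - 1) + (t - s) ^ (α - 1) := by
      have := rpow_subadd hsa.le (by linarith : (0:ℝ) ≤ t - s) hp.le (by linarith)
      calc (t - a) ^ (α - 1) = ((s - a) + (t - s)) ^ (α - 1) := by ring_nf
        _ ≤ (s - a) ^ (α - 1) + (t - s) ^ (α - 1) := this
    have hclt : (b - s) ^ (α - 1 - β) / (b - a) ^ (α - 1 - β) < 1 := by
      rw [div_lt_one (Real.rpow_pos_of_pos hba _)]
      exact Real.rpow_lt_rpow hbs.le (by linarith) hr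
    have hDc : ((t - a) ^ (α - 1) - (s - a) ^ (α - 1)) *
        ((b - s) ^ (α - 1 - β) / (b - a) ^ (α - 1 - β)) <
        (t - a) ^ (α - 1) - (s - a) ^ (α - 1) := by
      nlinarith
    have key : (t - a) ^ (α - 1) * (b - s) ^ (α - 1 - β) / (b - a) ^ (α - 1 - β) -
        (s - a) ^ (α - 1) * (b - s) ^ (α - 1 - β) / (b - a) ^ (α - 1 - β) =
        ((t - a) ^ (α - 1) - (s - a) ^ (α - 1)) *
          ((b - s) ^ (α - 1 - β) / (b - a) ^ (α - 1 - β)) := by ring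
    linarith [key, hDc, hsub]
  · rename_i h
    push_neg at h
    apply mul_lt_mul_of_pos_left _ (by positivity)
    have h1 : (t - a) ^ (α - 1) < (s - a) ^ (α - 1) :=
      Real.rpow_lt_rpow hta (by linarith) hp
    have := mul_lt_mul_of_pos_right h1 hc0
    calc (t - a) ^ (α - 1) * (b - s) ^ (α - 1 - β) / (b - a) ^ (α - 1 - β)
        = (t - a) ^ (α - 1) * ((b - s) ^ (α - 1 - β) / (b - a) ^ (α - 1 - β)) := by ring
      _ < (s - a) ^ (α - 1) * ((b - s) ^ (α - 1 - β) / (b - a) ^ (α - 1 - β)) := this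
      _ = (s - a) ^ (α - 1) * (b - s) ^ (α - 1 - β) / (b - a) ^ (α - 1 - β) := by ring

lemma H_le (hα : 1 < α) (hβ : 0 ≤ β) (hβα : β < α - 1) (hab : a < b)
    {s : ℝ} (hs : s ∈ Icc a b) :
    Hb a b α β s ≤ (1 / Real.Gamma α) *
      (((α - 1) / (2 * α - 2 - β)) ^ (α - 1) *
        ((α - 1 - β) / (2 * α - 2 - β)) ^ (α - 1 - β) * (b - a) ^ (α - 1)) := by
  have hΓ : 0 < Real.Gamma α := Real.Gamma_pos_of_pos (by linarith)
  set p := α - 1 with hpdef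
  set r := α - 1 - β with hrdef
  have hp : 0 < p := by simp [hpdef]; linarith
  have hr : 0 < r := by simp [hrdef]; linarith
  have hσ : 2 * α - 2 - β = p + r := by simp [hpdef, hrdef]; ring
  rw [hσ]
  set σ := p + r with hσdef
  have hσ0 : 0 < σ := by positivity
  have hba : 0 < b - a := by linarith
  have hsa : 0 ≤ s - a := by linarith [hs.1]
  have hbs : 0 ≤ b - s := by linarith [hs.2]
  unfold Hb
  apply mul_le_mul_of_nonneg_left _ (by positivity)
  -- AM-GM step
  set z₁ := σ * (s - a) / p with hz₁
  set z₂ := σ * (b - s) / r with hz₂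
  have hz₁0 : 0 ≤ z₁ := by positivity
  have hz₂0 : 0 ≤ z₂ := by positivity
  have hgm := Real.geom_mean_le_arith_mean2_weighted
    (le_of_lt (div_pos hp hσ0)) (le_of_lt (div_pos hr hσ0)) hz₁0 hz₂0
    (by field_simp; linarith [hσdef])
  have hsum : p / σ * z₁ + r / σ * z₂ = b - a := by
    field_simp [hz₁, hz₂]
    rw [hz₁, hz₂, ← mul_div_assoc, ← mul_div_assoc, mul_div_cancel_left₀ _ hp.ne',
      mul_div_cancel_left₀ _ hr.ne']
    ring
  rw [hsum] at hgm
  have hpow := Real.rpow_le_rpow (by positivity) hgm hσ0.le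
  have hlhs : (z₁ ^ (p / σ) * z₂ ^ (r / σ)) ^ σ = z₁ ^ p * z₂ ^ r := by
    rw [Real.mul_rpow (Real.rpow_nonneg hz₁0 _) (Real.rpow_nonneg hz₂0 _),
      ← Real.rpow_mul hz₁0, ← Real.rpow_mul hz₂0,
      div_mul_cancel₀ _ hσ0.ne', div_mul_cancel₀ _ hσ0.ne']
  rw [hlhs] at hpow
  have hz₁p : z₁ ^ p = (σ / p) ^ p * (s - a) ^ p := by
    rw [hz₁, show σ * (s - a) / p = σ / p * (s - a) by ring,
      Real.mul_rpow (by positivity) hsa]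
  have hz₂r : z₂ ^ r = (σ / r) ^ r * (b - s) ^ r := by
    rw [hz₂, show σ * (b - s) / r = σ / r * (b - s) by ring,
      Real.mul_rpow (by positivity) hbs]
  rw [hz₁p, hz₂r] at hpow
  -- hpow : (σ/p)^p * (s-a)^p * ((σ/r)^r * (b-s)^r) ≤ (b-a)^σ
  have e1 : (p / σ) ^ p * (σ / p) ^ p = 1 := by
    rw [← Real.mul_rpow (by positivity) (by positivity), div_mul_div_comm,
      mul_comm p σ, div_self (by positivity), Real.one_rpow]
  have e2 : (r / σ) ^ r * (σ / r) ^ r = 1 := by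
    rw [← Real.mul_rpow (by positivity) (by positivity), div_mul_div_comm,
      mul_comm r σ, div_self (by positivity), Real.one_rpow]
  have hmain : (s - a) ^ p * (b - s) ^ r ≤ (p / σ) ^ p * (r / σ) ^ r * (b - a) ^ σ := by
    have h2 := mul_le_mul_of_nonneg_left hpow
      (mul_nonneg (Real.rpow_nonneg (by positivity) p) (Real.rpow_nonneg (by positivity) r)
        : (0:ℝ) ≤ (p / σ) ^ p * (r / σ) ^ r)
    calc (s - a) ^ p * (b - s) ^ r
        = (p / σ) ^ p * (r / σ) ^ r * ((σ / p) ^ p * (s - a) ^ p * ((σ / r) ^ r * (b - s) ^ r)) := by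
          rw [show (p / σ) ^ p * (r / σ) ^ r * ((σ / p) ^ p * (s - a) ^ p * ((σ / r) ^ r * (b - s) ^ r))
            = ((p / σ) ^ p * (σ / p) ^ p) * ((r / σ) ^ r * (σ / r) ^ r) * ((s - a) ^ p * (b - s) ^ r) by ring,
            e1, e2]; ring
      _ ≤ (p / σ) ^ p * (r / σ) ^ r * (b - a) ^ σ := h2
  have hfin : (b - a) ^ σ / (b - a) ^ r = (b - a) ^ p := by
    rw [← Real.rpow_sub hba]; congr 1; ring
  calc (s - a) ^ p * (b - s) ^ r / (b - a) ^ r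
      ≤ (p / σ) ^ p * (r / σ) ^ r * (b - a) ^ σ / (b - a) ^ r := by
        gcongr
      _ = (p / σ) ^ p * (r / σ) ^ r * (b - a) ^ p := by
        rw [mul_div_assoc, hfin]

lemma cont_rpow_aux (c e : ℝ) (he : 0 < e) : Continuous (fun s : ℝ => (c - s) ^ e) := by
  rw [continuous_iff_continuousAt]
  intro x
  exact (Real.continuousAt_rpow_const _ _ (Or.inr he.le)).comp
    ((continuous_const.sub continuous_id).continuousAt)

lemma G_cont (hα : 1 < α) (hβ : 0 ≤ β) (hβα : β < α - 1) (t : ℝ) :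
    Continuous (fun s => G a b α β t s) := by
  have hp : 0 < α - 1 := by linarith
  have hr : 0 < α - 1 - β := by linarith
  unfold G
  apply Continuous.if_le
  · exact continuous_const.mul
      (((continuous_const.mul (cont_rpow_aux b _ hr)).div_const _).sub (cont_rpow_aux t _ hp))
  · exact continuous_const.mul ((continuous_const.mul (cont_rpow_aux b _ hr)).div_const _)
  · exact continuous_id
  · exact continuous_const
  · intro s hst
    rw [hst, sub_self, Real.zero_rpow hp.ne', sub_zero]

set_option maxHeartbeats 1000000 in
theorem stmt_10 (α β a b : ℝ) (hα : 1 < α) (hα2 : α ≤ 2) (hβ : 0 ≤ β)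
    (hβα : β < α - 1) (hab : a < b) (q u : ℝ → ℝ)
    (hq : ContinuousOn q (Set.Icc a b))
    (hu : ContinuousOn u (Set.Icc a b))
    (hne : ∃ t ∈ Set.Icc a b, u t ≠ 0)
    (hpos : ∀ t ∈ Set.Ioo a b, 0 < u t)
    (heq : ∀ t ∈ Set.Icc a b, u t = ∫ s in a..b, G a b α β t s * (q s * u s)) :
    ∫ t in a..b, max (q t) 0 >
      Real.Gamma α * ((2 * α - 2 - β) / ((b - a) * (α - 1))) ^ (α - 1) *
        ((2 * α - 2 - β) / (α - 1 - β)) ^ (α - 1 - β) := by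
  have hΓ : 0 < Real.Gamma α := Real.Gamma_pos_of_pos (by linarith)
  have hp : 0 < α - 1 := by linarith
  have hr : 0 < α - 1 - β := by linarith
  have hσ0 : 0 < 2 * α - 2 - β := by linarith
  have hba : 0 < b - a := by linarith
  have hab' : a ≤ b := hab.le
  set K := (1 / Real.Gamma α) *
      (((α - 1) / (2 * α - 2 - β)) ^ (α - 1) *
        ((α - 1 - β) / (2 * α - 2 - β)) ^ (α - 1 - β) * (b - a) ^ (α - 1)) with hK
  have hK0 : 0 < K := by
    apply mul_pos (by positivity)
    exact mul_pos (mul_pos (Real.rpow_pos_of_pos (by positivity) _)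
      (Real.rpow_pos_of_pos (by positivity) _)) (Real.rpow_pos_of_pos hba _)
  have hGK : ∀ t ∈ Icc a b, ∀ s ∈ Icc a b, G a b α β t s ≤ K :=
    fun t ht s hs => (G_le_H hα hα2 hβ hβα hab ht hs).trans (H_le hα hβ hβα hab hs)
  have hGKlt : ∀ t ∈ Icc a b, ∀ s ∈ Ioo a b, s ≠ t → G a b α β t s < K :=
    fun t ht s hs hst => lt_of_lt_of_le (G_lt_H hα hα2 hβ hβα hab ht hs hst)
      (H_le hα hβ hβα hab (Ioo_subset_Icc_self hs))
  have hG0 : ∀ t ∈ Icc a b, ∀ s ∈ Icc a b, 0 ≤ G a b α β t s :=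
    fun t ht s hs => G_nonneg hα hα2 hβ hβα hab ht hs
  -- u vanishes at a
  have hua : u a = 0 := by
    have h0 : EqOn (fun s => G a b α β a s * (q s * u s)) (fun _ => (0:ℝ)) (uIcc a b) := by
      intro s hs
      rw [uIcc_of_le hab'] at hs
      show G a b α β a s * (q s * u s) = 0
      unfold G
      split
      · rename_i h
        have hsa : s = a := le_antisymm h hs.1
        rw [hsa]
        simp [Real.zero_rpow hp.ne']
      · simp [Real.zero_rpow hp.ne']
    rw [heq a (left_mem_Icc.2 hab'), intervalIntegral.integral_congr h0,
      intervalIntegral.integral_zero]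
  have hub : 0 ≤ u b := by
    haveI : (nhdsWithin b (Ioo a b)).NeBot := by
      apply mem_closure_iff_nhdsWithin_neBot.mp
      rw [closure_Ioo hab.ne]
      exact right_mem_Icc.2 hab'
    have htd : Filter.Tendsto u (nhdsWithin b (Ioo a b)) (nhds (u b)) :=
      (hu.continuousWithinAt (right_mem_Icc.2 hab')).mono Ioo_subset_Icc_self
    exact ge_of_tendsto htd (Filter.eventually_of_mem self_mem_nhdsWithin
      fun x hx => (hpos x hx).le)
  have hu0 : ∀ x ∈ Icc a b, 0 ≤ u x := by
    intro x hx
    rcases eq_or_lt_of_le hx.1 with h1 | h1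
    · rw [← h1, hua]
    rcases eq_or_lt_of_le hx.2 with h2 | h2
    · rw [h2]; exact hub
    · exact (hpos x ⟨h1, h2⟩).le
  -- maximum of u
  obtain ⟨t₀, ht₀, hmax⟩ := isCompact_Icc.exists_isMaxOn (nonempty_Icc.2 hab') hu
  have hM0 : 0 < u t₀ :=
    lt_of_lt_of_le (hpos ((a + b) / 2) ⟨by linarith, by linarith⟩)
      (hmax ⟨by linarith, by linarith⟩)
  set M := u t₀ with hMdef
  -- continuity and integrability
  have huIcc : uIcc a b = Icc a b := uIcc_of_le hab'
  have hGc : Continuous (fun s => G a b α β t₀ s) := G_cont hα hβ hβα t₀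
  have hquc : ContinuousOn (fun s => q s * u s) (Icc a b) := hq.mul hu
  have hic : ContinuousOn (fun s => G a b α β t₀ s * (q s * u s)) (Icc a b) :=
    hGc.continuousOn.mul hquc
  have hint1 : IntervalIntegrable (fun s => G a b α β t₀ s * (q s * u s)) volume a b :=
    (huIcc ▸ hic).intervalIntegrable
  have hqpc : ContinuousOn (fun s => max (q s) 0) (Icc a b) := hq.sup continuousOn_const
  have hintKq : IntervalIntegrable (fun s => K * M * max (q s) 0) volume a b :=
    (huIcc ▸ (continuousOn_const.mul hqpc : ContinuousOn (fun s => K * M * max (q s) 0) (Icc a b))).intervalIntegrable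
  -- existence of a point with q * u positive
  have hex : ∃ s₀ ∈ Icc a b, 0 < q s₀ * u s₀ := by
    by_contra hcon
    push_neg at hcon
    have h1 : u t₀ ≤ 0 := by
      rw [heq t₀ ht₀]
      have h2 : (0:ℝ) ≤ ∫ s in a..b, -(G a b α β t₀ s * (q s * u s)) := by
        apply intervalIntegral.integral_nonneg hab'
        intro x hx
        have := mul_nonneg (hG0 t₀ ht₀ x hx) (neg_nonneg.2 (hcon x hx))
        simpa [mul_comm] using this
      rw [intervalIntegral.integral_neg] at h2
      linarith
    linarith
  obtain ⟨s₀, hs₀, hqu₀⟩ := hex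
  -- find s₁ ∈ Ioo a b, s₁ ≠ t₀, with q s₁ * u s₁ > 0
  have hcw : ContinuousWithinAt (fun s => q s * u s) (Icc a b) s₀ := hquc.continuousWithinAt hs₀
  have hev : (fun s => q s * u s) ⁻¹' (Ioi 0) ∈ nhdsWithin s₀ (Icc a b) :=
    hcw (Ioi_mem_nhds hqu₀)
  obtain ⟨ε, hε, hball⟩ := Metric.mem_nhdsWithin_iff.1 hev
  obtain ⟨s₁, hs₁m⟩ := ((Set.Ioo_infinite (show max a (s₀ - ε / 2) < min b (s₀ + ε / 2) from
    max_lt (lt_min hab (by linarith [hs₀.1])) (lt_min (by linarith [hs₀.2]) (by linarith)))).diff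
    (Set.finite_singleton t₀)).nonempty
  have hs₁lo := hs₁m.1.1
  have hs₁hi := hs₁m.1.2
  have hs₁Ioo : s₁ ∈ Ioo a b :=
    ⟨lt_of_le_of_lt (le_max_left _ _) hs₁lo, lt_of_lt_of_le hs₁hi (min_le_left _ _)⟩
  have hs₁I : s₁ ∈ Icc a b := Ioo_subset_Icc_self hs₁Ioo
  have hs₁ne : s₁ ≠ t₀ := by
    have := hs₁m.2; simpa using this
  have hqu₁ : 0 < q s₁ * u s₁ := by
    have hb1 : s₁ ∈ Metric.ball s₀ ε := by
      rw [Metric.mem_ball, Real.dist_eq, abs_lt]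
      constructor
      · have := le_max_right a (s₀ - ε / 2); linarith
      · have := min_le_right b (s₀ + ε / 2); linarith
    exact hball ⟨hb1, hs₁I⟩
  -- the comparison function φ
  set φ : ℝ → ℝ := fun s => K * M * max (q s) 0 - G a b α β t₀ s * (q s * u s) with hφ
  have hφ0 : ∀ s ∈ Icc a b, 0 ≤ φ s := by
    intro s hs
    have hGn := hG0 t₀ ht₀ s hs
    have hGle := hGK t₀ ht₀ s hs
    have hus := hu0 s hs
    have husM : u s ≤ M := hmax hs
    have hqle : q s ≤ max (q s) 0 := le_max_left _ _
    have hq0 : (0:ℝ) ≤ max (q s) 0 := le_max_right _ _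
    have h1 : G a b α β t₀ s * (q s * u s) ≤ G a b α β t₀ s * (max (q s) 0 * u s) :=
      mul_le_mul_of_nonneg_left (mul_le_mul_of_nonneg_right hqle hus) hGn
    have h2 : G a b α β t₀ s * (max (q s) 0 * u s) ≤ K * (max (q s) 0 * u s) :=
      mul_le_mul_of_nonneg_right hGle (mul_nonneg hq0 hus)
    have h3 : K * (max (q s) 0 * u s) ≤ K * (max (q s) 0 * M) :=
      mul_le_mul_of_nonneg_left (mul_le_mul_of_nonneg_left husM hq0) hK0.le
    have h4 : K * (max (q s) 0 * M) = K * M * max (q s) 0 := by ring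
    simp only [hφ]
    linarith
  have hφ₁ : 0 < φ s₁ := by
    have hGlt := hGKlt t₀ ht₀ s₁ hs₁Ioo hs₁ne
    have hu₁ : 0 < u s₁ := hpos s₁ hs₁Ioo
    have hq₁ : 0 < q s₁ := by
      by_contra h
      push_neg at h
      nlinarith
    have h1 : G a b α β t₀ s₁ * (q s₁ * u s₁) < K * (q s₁ * u s₁) :=
      mul_lt_mul_of_pos_right hGlt hqu₁
    have h2 : K * (q s₁ * u s₁) ≤ K * (q s₁ * M) :=
      mul_le_mul_of_nonneg_left (mul_le_mul_of_nonneg_left (hmax hs₁I) hq₁.le) hK0.le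
    have h4 : max (q s₁) 0 = q s₁ := max_eq_left hq₁.le
    simp only [hφ, h4]
    nlinarith
  have hφcont : ContinuousOn φ (Icc a b) := (continuousOn_const.mul hqpc).sub hic
  have hintφ : IntervalIntegrable φ volume a b := (huIcc ▸ hφcont).intervalIntegrable
  -- strict positivity of the integral of φ
  have hφcw : ContinuousWithinAt φ (Icc a b) s₁ := hφcont.continuousWithinAt hs₁I
  have hev2 : φ ⁻¹' (Ioi (φ s₁ / 2)) ∈ nhdsWithin s₁ (Icc a b) :=
    hφcw (Ioi_mem_nhds (half_lt_self hφ₁))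
  obtain ⟨δ, hδ, hb2⟩ := Metric.mem_nhdsWithin_iff.1 hev2
  set c := max a (s₁ - δ / 2) with hc
  set d := min b (s₁ + δ / 2) with hd
  have hac : a ≤ c := le_max_left _ _
  have hdb : d ≤ b := min_le_left _ _
  have hcd : c < d :=
    max_lt (lt_min hab (by linarith [hs₁Ioo.1])) (lt_min (by linarith [hs₁Ioo.2]) (by linarith))
  have hcb : c ≤ b := hcd.le.trans hdb
  have had : a ≤ d := hac.trans hcd.le
  have hintac : IntervalIntegrable φ volume a c :=
    hintφ.mono_set (by rw [uIcc_of_le hac, huIcc]; exact Icc_subset_Icc le_rfl hcb)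
  have hintcd : IntervalIntegrable φ volume c d :=
    hintφ.mono_set (by rw [uIcc_of_le hcd.le, huIcc]; exact Icc_subset_Icc hac hdb)
  have hintdb : IntervalIntegrable φ volume d b :=
    hintφ.mono_set (by rw [uIcc_of_le hdb, huIcc]; exact Icc_subset_Icc had le_rfl)
  have hintcb : IntervalIntegrable φ volume c b :=
    hintφ.mono_set (by rw [uIcc_of_le hcb, huIcc]; exact Icc_subset_Icc hac le_rfl)
  have h1 : 0 ≤ ∫ s in a..c, φ s :=
    intervalIntegral.integral_nonneg hac fun x hx => hφ0 x ⟨hx.1, hx.2.trans hcb⟩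
  have h3 : 0 ≤ ∫ s in d..b, φ s :=
    intervalIntegral.integral_nonneg hdb fun x hx => hφ0 x ⟨had.trans hx.1, hx.2⟩
  have h2 : 0 < ∫ s in c..d, φ s := by
    apply intervalIntegral.intervalIntegral_pos_of_pos_on hintcd _ hcd
    intro x hx
    have hxI : x ∈ Icc a b := ⟨hac.trans hx.1.le, hx.2.le.trans hdb⟩
    have hxb : x ∈ Metric.ball s₁ δ := by
      rw [Metric.mem_ball, Real.dist_eq, abs_lt]
      have h5 := hx.1
      have h6 := hx.2
      have := le_max_right a (s₁ - δ / 2)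
      have := min_le_right b (s₁ + δ / 2)
      constructor <;> linarith
    have h7 : φ s₁ / 2 < φ x := hb2 ⟨hxb, hxI⟩
    exact (half_pos hφ₁).trans h7
  have e1 : (∫ s in c..d, φ s) + ∫ s in d..b, φ s = ∫ s in c..b, φ s :=
    intervalIntegral.integral_add_adjacent_intervals hintcd hintdb
  have e2 : (∫ s in a..c, φ s) + ∫ s in c..b, φ s = ∫ s in a..b, φ s :=
    intervalIntegral.integral_add_adjacent_intervals hintac hintcb
  have hφpos : 0 < ∫ s in a..b, φ s := by rw [← e2, ← e1]; linarith
  -- linearity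
  have hsub : (∫ s in a..b, φ s) =
      (∫ s in a..b, K * M * max (q s) 0) - ∫ s in a..b, G a b α β t₀ s * (q s * u s) :=
    intervalIntegral.integral_sub hintKq hint1
  have hKint : (∫ s in a..b, K * M * max (q s) 0) = K * M * ∫ s in a..b, max (q s) 0 :=
    intervalIntegral.integral_const_mul _ _
  have hMeq : M = ∫ s in a..b, G a b α β t₀ s * (q s * u s) := heq t₀ ht₀
  have hfinal : M < K * M * ∫ s in a..b, max (q s) 0 := by
    rw [hsub, hKint, ← hMeq] at hφpos
    linarith
  have hXgt : 1 / K < ∫ s in a..b, max (q s) 0 := by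
    rw [div_lt_iff₀ hK0]
    nlinarith
  -- identify 1 / K with the stated constant
  have hbne : b - a ≠ 0 := hba.ne'
  have hpne : α - 1 ≠ 0 := hp.ne'
  have hrne : α - 1 - β ≠ 0 := hr.ne'
  have hσne : 2 * α - 2 - β ≠ 0 := hσ0.ne'
  have hprod : (Real.Gamma α * ((2 * α - 2 - β) / ((b - a) * (α - 1))) ^ (α - 1) *
      ((2 * α - 2 - β) / (α - 1 - β)) ^ (α - 1 - β)) * K = 1 := by
    rw [hK]
    have e₁ : ((2 * α - 2 - β) / ((b - a) * (α - 1))) ^ (α - 1) *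
        ((α - 1) / (2 * α - 2 - β)) ^ (α - 1) * (b - a) ^ (α - 1) = 1 := by
      rw [← Real.mul_rpow (by positivity) (by positivity),
        ← Real.mul_rpow (by positivity) hba.le,
        show (2 * α - 2 - β) / ((b - a) * (α - 1)) * ((α - 1) / (2 * α - 2 - β)) * (b - a) = 1 by
          rw [div_mul_div_comm, div_mul_eq_mul_div,
            div_eq_one_iff_eq (mul_ne_zero (mul_ne_zero hbne hpne) hσne)]
          ring,
        Real.one_rpow]
    have e₂ : ((2 * α - 2 - β) / (α - 1 - β)) ^ (α - 1 - β) *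
        ((α - 1 - β) / (2 * α - 2 - β)) ^ (α - 1 - β) = 1 := by
      rw [← Real.mul_rpow (by positivity) (by positivity),
        show (2 * α - 2 - β) / (α - 1 - β) * ((α - 1 - β) / (2 * α - 2 - β)) = 1 by
          rw [div_mul_div_comm, div_eq_one_iff_eq (mul_ne_zero hrne hσne)]
          ring,
        Real.one_rpow]
    calc (Real.Gamma α * ((2 * α - 2 - β) / ((b - a) * (α - 1))) ^ (α - 1) *
          ((2 * α - 2 - β) / (α - 1 - β)) ^ (α - 1 - β)) *
        ((1 / Real.Gamma α) *
          (((α - 1) / (2 * α - 2 - β)) ^ (α - 1) *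
            ((α - 1 - β) / (2 * α - 2 - β)) ^ (α - 1 - β) * (b - a) ^ (α - 1)))
        = (Real.Gamma α * (1 / Real.Gamma α)) *
          (((2 * α - 2 - β) / ((b - a) * (α - 1))) ^ (α - 1) *
            ((α - 1) / (2 * α - 2 - β)) ^ (α - 1) * (b - a) ^ (α - 1)) *
          (((2 * α - 2 - β) / (α - 1 - β)) ^ (α - 1 - β) *
            ((α - 1 - β) / (2 * α - 2 - β)) ^ (α - 1 - β)) := by ring
      _ = 1 := by rw [e₁, e₂, mul_one_div_cancel hΓ.ne']; ring
  have hfin2 : Real.Gamma α * ((2 * α - 2 - β) / ((b - a) * (α - 1))) ^ (α - 1) *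
      ((2 * α - 2 - β) / (α - 1 - β)) ^ (α - 1 - β) = 1 / K :=
    eq_one_div_of_mul_eq_one_left hprod
  rw [gt_iff_lt, hfin2]
  exact hXgt
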